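/- Let H be a finite-dimensional complex Hilbert space, |G⟩ ∈ H a unit vector, ν ∈ [0,1], and Ω an operator on H with |G⟩⟨G| ≤ Ω ≤ I and ‖Ω − |G⟩⟨G|‖ ≤ 1 − ν. Then for every density matrix σ on H, writing F := ⟨G|σ|G⟩, one has Tr[σΩ] ≤ F + (1−F)(1−ν) = 1 − ν(1−F); equivalently, 1 − F ≤ (1 − Tr[σΩ])/ν when ν > 0. -/

import Mathlib

open scoped BigOperators ComplexOrder
open Matrix Complex

noncomputable section

/-- The ℓ²→ℓ² operator norm of a matrix. -/
noncomputable def opNorm {ι : Type*} [Fintype ι] [DecidableEq ι] (M : Matrix ι ι ℂ) : ℝ :=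
  ‖Matrix.toEuclideanCLM (𝕜 := ℂ) M‖

lemma aux_trace_re_nonneg {n : Type*} [Fintype n] [DecidableEq n] {A : Matrix n n ℂ}
    (hA : A.PosSemidef) : 0 ≤ A.trace.re := by
  rw [Matrix.trace]
  have h : ∀ i, 0 ≤ (A i i).re := by
    intro i
    have := hA.re_dotProduct_nonneg (Pi.single i 1)
    simpa [dotProduct, Matrix.mulVec, Pi.single_apply] using this
  simpa [Matrix.diag] using Finset.sum_nonneg (fun i _ => h i)

lemma aux_trace_mul_re_nonneg {n : Type*} [Fintype n] [DecidableEq n]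
    {A B : Matrix n n ℂ} (hA : A.PosSemidef) (hB : B.PosSemidef) :
    0 ≤ ((A * B).trace).re := by
  open scoped MatrixOrder in
  obtain ⟨s, hs⟩ := CStarAlgebra.nonneg_iff_eq_star_mul_self.mp hA.nonneg
  have h2 : (A * B).trace = ((sᴴ)ᴴ * B * sᴴ).trace := by
    rw [hs, conjTranspose_conjTranspose, Matrix.star_eq_conjTranspose, Matrix.mul_assoc,
      Matrix.trace_mul_comm]
  rw [h2]
  exact aux_trace_re_nonneg (hB.conjTranspose_mul_mul_same sᴴ)

lemma aux_smul_one_sub_posSemidef {n : Type*} [Fintype n] [DecidableEq n]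
    {Δ : Matrix n n ℂ} {c : ℝ}
    (hΔ : Δ.PosSemidef) (hc : ‖Matrix.toEuclideanCLM (𝕜 := ℂ) Δ‖ ≤ c) :
    ((c : ℂ) • (1 : Matrix n n ℂ) - Δ).PosSemidef := by
  refine Matrix.PosSemidef.of_dotProduct_mulVec_nonneg ?_ ?_
  · exact IsHermitian.sub (by simp [Matrix.IsHermitian, Matrix.conjTranspose_smul]) hΔ.1
  · intro x
    have hz := hΔ.dotProduct_mulVec_nonneg x
    set z := star x ⬝ᵥ (Δ *ᵥ x) with hzdef
    obtain ⟨hzre, hzim⟩ := Complex.nonneg_iff.mp hz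
    set x' : EuclideanSpace ℂ n := (WithLp.equiv 2 _).symm x with hx'
    have hTx : Matrix.toEuclideanCLM (𝕜 := ℂ) Δ x' = (WithLp.equiv 2 _).symm (Δ *ᵥ x) :=
      Matrix.toEuclideanCLM_toLp Δ x
    have hinner : (inner ℂ x' (Matrix.toEuclideanCLM (𝕜 := ℂ) Δ x') : ℂ) = z := by
      rw [hTx]; exact dotProduct_comm (Δ *ᵥ x) (star x)
    have hnx : (star x ⬝ᵥ x).re = ‖x'‖ ^ 2 := by
      have : (inner ℂ x' x' : ℂ) = star x ⬝ᵥ x := dotProduct_comm x (star x)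
      rw [← this]
      exact_mod_cast inner_self_eq_norm_sq (𝕜 := ℂ) x'
    have hbound : z.re ≤ c * ‖x'‖ ^ 2 := by
      calc z.re ≤ ‖(inner ℂ x' (Matrix.toEuclideanCLM (𝕜 := ℂ) Δ x') : ℂ)‖ := by
            rw [hinner]; exact Complex.re_le_norm z
        _ ≤ ‖x'‖ * ‖Matrix.toEuclideanCLM (𝕜 := ℂ) Δ x'‖ := norm_inner_le_norm _ _
        _ ≤ ‖x'‖ * (‖Matrix.toEuclideanCLM (𝕜 := ℂ) Δ‖ * ‖x'‖) := by
            gcongr; exact ContinuousLinearMap.le_opNorm _ _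
        _ ≤ ‖x'‖ * (c * ‖x'‖) := by gcongr
        _ = c * ‖x'‖ ^ 2 := by ring
    have hxx : (star x ⬝ᵥ x).im = 0 := by
      simpa using (Complex.nonneg_iff.mp (dotProduct_star_self_nonneg x)).2.symm
    have hexp : star x ⬝ᵥ (((c : ℂ) • (1 : Matrix n n ℂ) - Δ) *ᵥ x)
        = (c : ℂ) * (star x ⬝ᵥ x) - z := by
      rw [Matrix.sub_mulVec, Matrix.smul_mulVec, Matrix.one_mulVec,
        dotProduct_sub, dotProduct_smul]
      simp [smul_eq_mul, hzdef]
    rw [hexp, Complex.nonneg_iff]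
    constructor
    · simp only [Complex.sub_re, Complex.mul_re, Complex.ofReal_re, Complex.ofReal_im,
        hxx, zero_mul, mul_zero, sub_zero]
      rw [hnx]
      linarith
    · simp [Complex.sub_im, Complex.mul_im, hxx, ← hzim]

/-- Key spectral-gap-to-fidelity step (step (a) in the proof of Theorem 2 of the paper).
On a finite-dimensional complex Hilbert space (realized as `ℂ^d`), if `|G⟩⟨G| ≤ Ω ≤ I` and
`‖Ω - |G⟩⟨G|‖ ≤ 1 - ν`, then every density matrix `σ` with fidelity `F = ⟨G|σ|G⟩`
satisfies `Tr[σΩ] ≤ F + (1-F)(1-ν) = 1 - ν(1-F)`; equivalently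
`1 - F ≤ (1 - Tr[σΩ])/ν` when `ν > 0`. -/
theorem trace_test_le_of_gap (d : ℕ) (g : Fin d → ℂ) (hg : star g ⬝ᵥ g = 1)
    (ν : ℝ) (hν0 : 0 ≤ ν) (hν1 : ν ≤ 1)
    (Ω : Matrix (Fin d) (Fin d) ℂ)
    (hlow : (Ω - Matrix.vecMulVec g (star g)).PosSemidef)
    (hup : ((1 : Matrix (Fin d) (Fin d) ℂ) - Ω).PosSemidef)
    (hgap : opNorm (Ω - Matrix.vecMulVec g (star g)) ≤ 1 - ν)
    (σ : Matrix (Fin d) (Fin d) ℂ) (hσ : σ.PosSemidef) (hσ1 : σ.trace = 1) :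
    ((σ * Ω).trace).re ≤ 1 - ν * (1 - (star g ⬝ᵥ (σ *ᵥ g)).re) ∧
    (0 < ν → 1 - (star g ⬝ᵥ (σ *ᵥ g)).re ≤ (1 - ((σ * Ω).trace).re) / ν) := by
  set P : Matrix (Fin d) (Fin d) ℂ := Matrix.vecMulVec g (star g) with hP
  set Δ : Matrix (Fin d) (Fin d) ℂ := Ω - P with hΔ
  -- basic facts about P
  have hPH : Pᴴ = P := by
    ext i j
    simp [hP, Matrix.conjTranspose_apply, Matrix.vecMulVec_apply, mul_comm]
  have hPg : P *ᵥ g = g := by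
    funext i
    have : (P *ᵥ g) i = g i * (star g ⬝ᵥ g) := by
      simp only [hP, Matrix.mulVec, dotProduct, Matrix.vecMulVec_apply, Pi.star_apply,
        Finset.mul_sum]
      exact Finset.sum_congr rfl fun k _ => by ring
    rw [this, hg, mul_one]
  have hPP : P * P = P := by
    ext i j
    have : (P * P) i j = (g i * star g j) * (star g ⬝ᵥ g) := by
      simp only [hP, Matrix.mul_apply, Matrix.vecMulVec_apply, Pi.star_apply,
        dotProduct, Finset.mul_sum]
      exact Finset.sum_congr rfl fun k _ => by ring
    rw [this, hg, mul_one]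
    simp [hP, Matrix.vecMulVec_apply]
  -- Ω g = g
  have hΩg : Ω *ᵥ g = g := by
    have h1 : (0 : ℂ) ≤ star g ⬝ᵥ (Δ *ᵥ g) := hlow.dotProduct_mulVec_nonneg g
    have h2 : (0 : ℂ) ≤ star g ⬝ᵥ (((1 : Matrix (Fin d) (Fin d) ℂ) - Ω) *ᵥ g) := hup.dotProduct_mulVec_nonneg g
    have hΔg : star g ⬝ᵥ (Δ *ᵥ g) = star g ⬝ᵥ (Ω *ᵥ g) - 1 := by
      rw [hΔ, Matrix.sub_mulVec, dotProduct_sub, hPg, hg]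
    have hUg : star g ⬝ᵥ (((1 : Matrix (Fin d) (Fin d) ℂ) - Ω) *ᵥ g)
        = 1 - star g ⬝ᵥ (Ω *ᵥ g) := by
      rw [Matrix.sub_mulVec, dotProduct_sub, Matrix.one_mulVec, hg]
    have hzero : star g ⬝ᵥ (((1 : Matrix (Fin d) (Fin d) ℂ) - Ω) *ᵥ g) = 0 := by
      have h1' : (0:ℂ) ≤ star g ⬝ᵥ (Ω *ᵥ g) - 1 := by rwa [hΔg] at h1
      have : star g ⬝ᵥ (((1 : Matrix (Fin d) (Fin d) ℂ) - Ω) *ᵥ g) ≤ 0 := by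
        rw [hUg]; exact sub_nonpos.mpr (sub_nonneg.mp h1')
      exact le_antisymm this h2
    have := (hup.dotProduct_mulVec_zero_iff g).mp hzero
    have h3 : (1 : Matrix (Fin d) (Fin d) ℂ) *ᵥ g - Ω *ᵥ g = 0 := by
      rwa [Matrix.sub_mulVec] at this
    rw [Matrix.one_mulVec] at h3
    exact (sub_eq_zero.mp h3).symm
  have hΔg0 : Δ *ᵥ g = 0 := by rw [hΔ, Matrix.sub_mulVec, hΩg, hPg, sub_self]
  have hΔP : Δ * P = 0 := by
    ext i j
    have : (Δ * P) i j = (Δ *ᵥ g) i * star g j := by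
      simp only [Matrix.mul_apply, hP, Matrix.vecMulVec_apply, Pi.star_apply,
        Matrix.mulVec, dotProduct, Finset.sum_mul]
      exact Finset.sum_congr rfl fun k _ => by ring
    rw [this, hΔg0]
    simp
  have hPΔ : P * Δ = 0 := by
    have := congrArg Matrix.conjTranspose hΔP
    simpa [Matrix.conjTranspose_mul, hPH, hlow.1.eq] using this
  set Q : Matrix (Fin d) (Fin d) ℂ := 1 - P with hQ
  have hQH : Qᴴ = Q := by rw [hQ, Matrix.conjTranspose_sub, hPH]; simp
  have hQQ : Q * Q = Q := by
    rw [hQ, Matrix.sub_mul, Matrix.mul_sub, Matrix.mul_sub, hPP]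
    simp
  set τ : Matrix (Fin d) (Fin d) ℂ := Q * σ * Qᴴ with hτdef
  have hτ : τ.PosSemidef := hσ.mul_mul_conjTranspose_same Q
  have hQτ : τ = Q * σ * Q := by rw [hτdef, hQH]
  have hQΔ : Q * Δ = Δ := by rw [hQ, Matrix.sub_mul, Matrix.one_mul, hPΔ, sub_zero]
  have hΔQ : Δ * Q = Δ := by rw [hQ, Matrix.mul_sub, Matrix.mul_one, hΔP, sub_zero]
  have hQΔQ : Q * Δ * Q = Δ := by rw [hQΔ, hΔQ]
  -- trace identities
  set F : ℂ := star g ⬝ᵥ (σ *ᵥ g) with hF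
  have htrP : (σ * P).trace = F := by
    have hdiag : ∀ i, (σ * P) i i = star g i * (σ *ᵥ g) i := by
      intro i
      simp only [Matrix.mul_apply, hP, Matrix.vecMulVec_apply, Pi.star_apply,
        Matrix.mulVec, dotProduct, Finset.mul_sum]
      exact Finset.sum_congr rfl fun k _ => by ring
    rw [Matrix.trace, hF]
    exact Finset.sum_congr rfl fun i _ => hdiag i
  have htrτ : τ.trace = 1 - F := by
    rw [hQτ, Matrix.trace_mul_cycle, hQQ, Matrix.trace_mul_comm, hQ, Matrix.mul_sub,
      Matrix.mul_one, Matrix.trace_sub, hσ1, htrP]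
  have htrΔ : (σ * Δ).trace = (τ * Δ).trace := by
    calc (σ * Δ).trace = (σ * (Q * Δ * Q)).trace := by rw [hQΔQ]
      _ = (σ * (Q * Δ) * Q).trace := by rw [← Matrix.mul_assoc]
      _ = (Q * (σ * (Q * Δ))).trace := Matrix.trace_mul_comm _ _
      _ = (τ * Δ).trace := by rw [hQτ]; simp only [Matrix.mul_assoc]
  -- the key inequality
  have hcΔ : (((1 - ν : ℝ) : ℂ) • (1 : Matrix (Fin d) (Fin d) ℂ) - Δ).PosSemidef :=
    aux_smul_one_sub_posSemidef hlow hgap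
  have hkey : 0 ≤ ((τ * ((((1 - ν : ℝ) : ℂ) • 1) - Δ)).trace).re :=
    aux_trace_mul_re_nonneg hτ hcΔ
  have hexp : (τ * ((((1 - ν : ℝ) : ℂ) • 1) - Δ)).trace
      = ((1 - ν : ℝ) : ℂ) * τ.trace - (τ * Δ).trace := by
    rw [Matrix.mul_sub, Matrix.mul_smul, Matrix.mul_one, Matrix.trace_sub, Matrix.trace_smul]
    simp [smul_eq_mul]
  have hkey2 : ((τ * Δ).trace).re ≤ (1 - ν) * (1 - F.re) := by
    rw [hexp] at hkey
    have hre : (((1 - ν : ℝ) : ℂ) * τ.trace - (τ * Δ).trace).re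
        = (1 - ν) * (τ.trace).re - ((τ * Δ).trace).re := by
      simp [Complex.sub_re, Complex.mul_re]
    rw [hre] at hkey
    have : (τ.trace).re = 1 - F.re := by rw [htrτ]; simp
    rw [this] at hkey
    linarith
  -- combine
  have hΩsplit : (σ * Ω).trace = F + (σ * Δ).trace := by
    have : Ω = P + Δ := by rw [hΔ]; abel
    rw [this, Matrix.mul_add, Matrix.trace_add, htrP]
  have hmain : ((σ * Ω).trace).re ≤ 1 - ν * (1 - F.re) := by
    rw [hΩsplit]
    have : (F + (σ * Δ).trace).re = F.re + ((σ * Δ).trace).re := by simp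
    rw [this, htrΔ]
    nlinarith [hkey2]
  refine ⟨hmain, fun hνpos => ?_⟩
  rw [le_div_iff₀ hνpos]
  nlinarith [hmain]

end
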